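/- Let F : ℝ → ℝ be continuous and 1-periodic, and K : ℝ → ℝ continuous, 1-periodic with 0 < λ ≤ K. Define w(y) = −∫₀^y (F(s) − c)/K(s) ds + c₁ where c = (∫₀¹ F/K)/(∫₀¹ 1/K) and c₁ makes ∫₀¹ w = 0. Then w is 1-periodic with zero mean and satisfies −(K w')' = F' in the distributional sense on ℝ, i.e., K(y)w'(y) + F(y) = c for all y. -/

import Mathlib

open Real

/-- Explicit solution of the 1D cell problem −(Kw')' = F': w is 1-periodic, mean zero,
    and Kw' + F ≡ c. -/
theorem corrector_cell_problem
    (F K : ℝ → ℝ) (lam : ℝ) (hlam : 0 < lam)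
    (hF : Continuous F) (hFper : ∀ y, F (y + 1) = F y)
    (hK : Continuous K) (hKper : ∀ y, K (y + 1) = K y)
    (hKbd : ∀ y, lam ≤ K y)
    (c c₁ : ℝ) (w : ℝ → ℝ)
    (hc : c = (∫ y in (0:ℝ)..1, F y / K y) / (∫ y in (0:ℝ)..1, (K y)⁻¹))
    (hc₁ : c₁ = ∫ y in (0:ℝ)..1, (∫ s in (0:ℝ)..y, (F s - c) / K s))
    (hw : ∀ y, w y = -(∫ s in (0:ℝ)..y, (F s - c) / K s) + c₁) :
    (∀ y, w (y + 1) = w y) ∧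
    (∫ y in (0:ℝ)..1, w y) = 0 ∧
    (∀ y, K y * deriv w y + F y = c) := by
  have hKpos : ∀ y, 0 < K y := fun y => lt_of_lt_of_le hlam (hKbd y)
  have hKne : ∀ y, K y ≠ 0 := fun y => (hKpos y).ne'
  set g : ℝ → ℝ := fun s => (F s - c) / K s with hg_def
  have hg : Continuous g := (hF.sub continuous_const).div hK hKne
  have hgint : ∀ a b : ℝ, IntervalIntegrable g MeasureTheory.volume a b :=
    fun a b => hg.intervalIntegrable a b
  -- positivity of ∫ 1/K
  have hinvpos : 0 < ∫ y in (0:ℝ)..1, (K y)⁻¹ := by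
    apply intervalIntegral.intervalIntegral_pos_of_pos_on
    · exact (hK.inv₀ hKne).intervalIntegrable 0 1
    · intro x _; exact inv_pos.mpr (hKpos x)
    · norm_num
  -- ∫₀¹ g = 0
  have hgzero : (∫ s in (0:ℝ)..1, g s) = 0 := by
    have h1 : (∫ s in (0:ℝ)..1, g s)
        = (∫ s in (0:ℝ)..1, F s / K s) - c * ∫ s in (0:ℝ)..1, (K s)⁻¹ := by
      calc (∫ s in (0:ℝ)..1, g s)
          = ∫ s in (0:ℝ)..1, (F s / K s - c * (K s)⁻¹) := by
            apply intervalIntegral.integral_congr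
            intro s _
            simp only [hg_def, div_eq_mul_inv]
            ring
        _ = (∫ s in (0:ℝ)..1, F s / K s) - ∫ s in (0:ℝ)..1, c * (K s)⁻¹ :=
            intervalIntegral.integral_sub ((hF.div hK hKne).intervalIntegrable 0 1)
              ((continuous_const.mul (hK.inv₀ hKne)).intervalIntegrable 0 1)
        _ = _ := by rw [intervalIntegral.integral_const_mul]
    rw [h1, hc, div_mul_cancel₀ _ hinvpos.ne', sub_self]
  have hgper : Function.Periodic g 1 := by
    intro s; simp only [hg_def, hFper, hKper]
  -- periodicity of w
  have hper : ∀ y, w (y + 1) = w y := by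
    intro y
    rw [hw, hw]
    have hsplit : (∫ s in (0:ℝ)..y + 1, g s)
        = (∫ s in (0:ℝ)..y, g s) + ∫ s in y..y + 1, g s :=
      (intervalIntegral.integral_add_adjacent_intervals (hgint 0 y) (hgint y (y + 1))).symm
    have hshift : (∫ s in y..y + 1, g s) = ∫ s in (0:ℝ)..0 + 1, g s :=
      hgper.intervalIntegral_add_eq y 0
    rw [hsplit, hshift]
    simp [hgzero]
  refine ⟨hper, ?_, ?_⟩
  · -- mean zero
    have hIcont : Continuous fun y => ∫ s in (0:ℝ)..y, g s :=
      intervalIntegral.continuous_primitive hgint 0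
    have : (∫ y in (0:ℝ)..1, w y)
        = (∫ y in (0:ℝ)..1, -(∫ s in (0:ℝ)..y, g s)) + ∫ y in (0:ℝ)..1, c₁ := by
      rw [← intervalIntegral.integral_add (f := fun y => -(∫ s in (0:ℝ)..y, g s))
        (hIcont.neg.intervalIntegrable 0 1)
        (intervalIntegrable_const)]
      apply intervalIntegral.integral_congr
      intro y _; exact hw y
    rw [this, intervalIntegral.integral_neg, intervalIntegral.integral_const]
    rw [hc₁]
    simp
  · -- derivative
    intro y
    have hW : w = fun y => -(∫ s in (0:ℝ)..y, g s) + c₁ := funext hw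
    have hI : HasDerivAt (fun u => ∫ s in (0:ℝ)..u, g s) (g y) y :=
      intervalIntegral.integral_hasDerivAt_right (hgint 0 y)
        (hg.stronglyMeasurableAtFilter _ _) hg.continuousAt
    have hWd : HasDerivAt w (-(g y)) y := by
      rw [hW]; exact (hI.neg).add_const c₁
    rw [hWd.deriv]
    simp only [hg_def]
    have hKy := hKne y
    field_simp
    ring
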